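/- Let f : ℝ → ℝ be five times continuously differentiable and fix x ∈ ℝ. For h > 0 define the cell averages ū_i(h) = (1/h)∫_{x+(i−1/2)h}^{x+(i+1/2)h} f(t) dt for integers i, and the three substencil reconstructions u⁰(h) = (2ū_{−2}(h) − 7ū_{−1}(h) + 11ū₀(h))/6, u¹(h) = (−ū_{−1}(h) + 5ū₀(h) + 2ū₁(h))/6, u²(h) = (2ū₀(h) + 5ū₁(h) − ū₂(h))/6. Then the combination with the ideal weights d₀ = 1/10, d₁ = 6/10, d₂ = 3/10 is fifth-order accurate: (1/10)u⁰(h) + (6/10)u¹(h) + (3/10)u²(h) − f(x + h/2) = O(h⁵) as h → 0⁺. -/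

import Mathlib

open Asymptotics Filter

/-- For f ∈ C⁵, the ideal-weight combination of the three
third-order substencil reconstructions from cell averages is a fifth-order
accurate approximation of f(x + h/2):
(1/10)u⁰(h) + (6/10)u¹(h) + (3/10)u²(h) − f(x + h/2) = O(h⁵) as h → 0⁺. -/
noncomputable def wC : Fin 6 → ℝ := ![-2, 15, -60, 20, 30, -3]
noncomputable def wM : Fin 6 → ℝ := ![-5/2, -3/2, -1/2, 1/2, 3/2, 5/2]
noncomputable def wT (x : ℝ) (j : ℕ) (g : ℝ → ℝ) (h : ℝ) : ℝ :=
  ∑ i : Fin 6, wC i * wM i ^ j * g (x + wM i * h)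

lemma wT_hasDerivAt (x : ℝ) (j : ℕ) {g g' : ℝ → ℝ}
    (hg : ∀ t, HasDerivAt g (g' t) t) (h : ℝ) :
    HasDerivAt (wT x j g) (wT x (j+1) g' h) h := by
  unfold wT
  refine HasDerivAt.fun_sum fun i _ => ?_
  have h1 : HasDerivAt (fun h : ℝ => x + wM i * h) (wM i) h := by
    simpa using ((hasDerivAt_id h).const_mul (wM i)).const_add x
  have h3 := ((hg (x + wM i * h)).comp h h1).const_mul (wC i * wM i ^ j)
  refine h3.congr_deriv ?_
  ring

lemma wT_continuous (x : ℝ) (j : ℕ) {g : ℝ → ℝ} (hg : Continuous g) :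
    Continuous (wT x j g) := by
  unfold wT
  exact continuous_finset_sum _ fun i _ => by fun_prop

-- MVT step lemma
lemma mvt_step {u v : ℝ → ℝ} {m : ℕ}
    (hu : ∀ t, HasDerivAt u (v t) t) (hu0 : u 0 = 0)
    (hv : v =O[nhds (0:ℝ)] fun h => h ^ m) :
    u =O[nhds (0:ℝ)] fun h => h ^ (m+1) := by
  rw [isBigO_iff] at hv ⊢
  obtain ⟨C, hC⟩ := hv
  rw [Metric.eventually_nhds_iff] at hC
  obtain ⟨δ, hδ, hball⟩ := hC
  refine ⟨|C|, ?_⟩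
  rw [Metric.eventually_nhds_iff]
  refine ⟨δ, hδ, fun h hh => ?_⟩
  have hsub : ∀ t ∈ Set.Icc (-|h|) |h|, ‖v t‖ ≤ |C| * |h| ^ m := by
    intro t ht
    have hth : |t| ≤ |h| := abs_le.2 ⟨ht.1, ht.2⟩
    have : dist t 0 < δ := by
      simp only [Real.dist_eq, sub_zero] at hh ⊢
      exact lt_of_le_of_lt hth hh
    calc ‖v t‖ ≤ C * ‖t ^ m‖ := hball this
      _ ≤ |C| * |h| ^ m := by
          rw [Real.norm_eq_abs, abs_pow]
          gcongr
          exact le_abs_self C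
  have h0m : (0:ℝ) ∈ Set.Icc (-|h|) |h| := by
    constructor <;> simp [abs_nonneg]
  have hhm : h ∈ Set.Icc (-|h|) |h| := by
    constructor
    · exact neg_abs_le h
    · exact le_abs_self h
  have := Convex.norm_image_sub_le_of_norm_hasDerivWithin_le
    (f := u) (f' := v) (s := Set.Icc (-|h|) |h|)
    (fun t _ => (hu t).hasDerivWithinAt) hsub (convex_Icc _ _) h0m hhm
  rw [hu0, sub_zero] at this
  calc ‖u h‖ ≤ |C| * |h| ^ m * ‖h - 0‖ := this
    _ = |C| * ‖h ^ (m+1)‖ := by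
        rw [sub_zero, Real.norm_eq_abs, Real.norm_eq_abs, abs_pow, pow_succ]
        ring

noncomputable def wPsi (f : ℝ → ℝ) (x : ℝ) (j : ℕ) (h : ℝ) : ℝ :=
  wT x (j+1) (iteratedDeriv j f) h -
    (60*((j:ℝ)+1)*(1/2)^j * iteratedDeriv j f (x+h/2)
      + 60*h*(1/2)^(j+1) * iteratedDeriv (j+1) f (x+h/2))

section
variable {f : ℝ → ℝ}

lemma hD (hf : ContDiff ℝ 5 f) (j : ℕ) (hj : j < 5) (t : ℝ) :
    HasDerivAt (iteratedDeriv j f) (iteratedDeriv (j+1) f t) t := by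
  have := (hf.differentiable_iteratedDeriv j (by exact_mod_cast hj)).differentiableAt (x := t)
  rw [iteratedDeriv_succ]
  exact this.hasDerivAt

lemma halfDeriv' (hf : ContDiff ℝ 5 f) (x : ℝ) (j : ℕ) (hj : j < 5) (h : ℝ) :
    HasDerivAt (fun h : ℝ => iteratedDeriv j f (x + h/2))
      (iteratedDeriv (j+1) f (x + h/2) * (1/2)) h := by
  have h1 : HasDerivAt (fun h : ℝ => x + h/2) (1/2) h := by
    simpa using ((hasDerivAt_id h).div_const 2).const_add x
  exact (hD hf j hj (x + h/2)).comp h h1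

lemma wPsi_step (hf : ContDiff ℝ 5 f) (x : ℝ) (j : ℕ) (hj : j ≤ 3) (h : ℝ) :
    HasDerivAt (wPsi f x j) (wPsi f x (j+1) h) h := by
  have hTd := wT_hasDerivAt x (j+1) (hD hf j (by omega)) h
  have ha : HasDerivAt (fun h : ℝ => 60*((j:ℝ)+1)*(1/2)^j * iteratedDeriv j f (x+h/2))
      (60*((j:ℝ)+1)*(1/2)^j * (iteratedDeriv (j+1) f (x+h/2) * (1/2))) h :=
    (halfDeriv' hf x j (by omega) h).const_mul _
  have hb : HasDerivAt (fun h : ℝ => 60*h*(1/2)^(j+1) * iteratedDeriv (j+1) f (x+h/2))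
      (60*(1/2)^(j+1) * iteratedDeriv (j+1) f (x+h/2)
        + 60*h*(1/2)^(j+1) * (iteratedDeriv (j+2) f (x+h/2) * (1/2))) h := by
    have h1 : HasDerivAt (fun h : ℝ => 60*h*(1/2:ℝ)^(j+1)) (60*(1/2:ℝ)^(j+1)) h := by
      simpa using ((hasDerivAt_id h).const_mul (60:ℝ)).mul_const ((1/2:ℝ)^(j+1))
    have := h1.mul (halfDeriv' hf x (j+1) (by omega) h)
    exact this
  have := hTd.sub (ha.add hb)
  refine this.congr_deriv ?_
  all_goals (unfold wPsi; push_cast; ring)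

lemma wPsi_zero (x : ℝ) (j : ℕ) (hj : j ≤ 4) : wPsi f x j 0 = 0 := by
  interval_cases j <;>
    simp [wPsi, wT, wC, wM, Fin.sum_univ_succ, Matrix.cons_val_zero, Matrix.cons_val_succ] <;> ring

end

lemma wPsi_four_isBigO {f : ℝ → ℝ} (hf : ContDiff ℝ 5 f) (x : ℝ) :
    wPsi f x 4 =O[nhds (0:ℝ)] fun h => h ^ 1 := by
  set A : ℝ → ℝ := fun h => wT x 5 (iteratedDeriv 4 f) h
    - 60*(((4:ℕ):ℝ)+1)*(1/2)^4 * iteratedDeriv 4 f (x+h/2) with hAdef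
  set B : ℝ → ℝ := fun h => 60*h*(1/2)^5 * iteratedDeriv 5 f (x+h/2) with hBdef
  have hD5c : Continuous (iteratedDeriv 5 f) := hf.continuous_iteratedDeriv 5 (by norm_num)
  have hA : A =O[nhds (0:ℝ)] fun h => h ^ 1 := by
    have hder : ∀ h : ℝ, HasDerivAt A
        (wT x 6 (iteratedDeriv 5 f) h
          - 60*(((4:ℕ):ℝ)+1)*(1/2)^4 * (iteratedDeriv 5 f (x+h/2) * (1/2))) h := by
      intro h
      exact (wT_hasDerivAt x 5 (hD hf 4 (by norm_num)) h).sub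
        ((halfDeriv' hf x 4 (by norm_num) h).const_mul _)
    have hA0 : A 0 = 0 := by
      simp [hAdef, wT, wC, wM, Fin.sum_univ_succ, Matrix.cons_val_zero, Matrix.cons_val_succ]
      ring
    have hcont : Continuous fun h : ℝ => wT x 6 (iteratedDeriv 5 f) h
        - 60*(((4:ℕ):ℝ)+1)*(1/2)^4 * (iteratedDeriv 5 f (x+h/2) * (1/2)) := by
      apply Continuous.sub (wT_continuous x 6 hD5c)
      fun_prop
    have hO1 : (fun h : ℝ => wT x 6 (iteratedDeriv 5 f) h
        - 60*(((4:ℕ):ℝ)+1)*(1/2)^4 * (iteratedDeriv 5 f (x+h/2) * (1/2)))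
        =O[nhds (0:ℝ)] fun h => h ^ 0 := by
      simp only [pow_zero]
      exact (hcont.tendsto 0).isBigO_one ℝ
    exact mvt_step hder hA0 hO1
  have hB : B =O[nhds (0:ℝ)] fun h => h ^ 1 := by
    have hc : (fun h : ℝ => 60*(1/2:ℝ)^5 * iteratedDeriv 5 f (x+h/2))
        =O[nhds (0:ℝ)] (fun _ => (1:ℝ)) := by
      have : Continuous fun h : ℝ => 60*(1/2:ℝ)^5 * iteratedDeriv 5 f (x+h/2) := by fun_prop
      exact (this.tendsto 0).isBigO_one ℝ
    have := (isBigO_refl (fun h : ℝ => h) (nhds (0:ℝ))).mul hc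
    refine IsBigO.congr' (this) ?_ ?_
    · filter_upwards with h; simp [hBdef]; ring
    · filter_upwards with h; simp [pow_one]
  have : wPsi f x 4 = fun h => A h - B h := by
    funext h
    simp only [wPsi, hAdef, hBdef]
    push_cast
    ring
  rw [this]
  exact hA.sub hB

lemma wPsi_zero_isBigO {f : ℝ → ℝ} (hf : ContDiff ℝ 5 f) (x : ℝ) :
    wPsi f x 0 =O[nhds (0:ℝ)] fun h => h ^ 5 := by
  have b4 := wPsi_four_isBigO hf x
  have b3 : wPsi f x 3 =O[nhds (0:ℝ)] fun h => h ^ 2 :=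
    mvt_step (wPsi_step hf x 3 (by norm_num)) (wPsi_zero x 3 (by norm_num)) b4
  have b2 : wPsi f x 2 =O[nhds (0:ℝ)] fun h => h ^ 3 :=
    mvt_step (wPsi_step hf x 2 (by norm_num)) (wPsi_zero x 2 (by norm_num)) b3
  have b1 : wPsi f x 1 =O[nhds (0:ℝ)] fun h => h ^ 4 :=
    mvt_step (wPsi_step hf x 1 (by norm_num)) (wPsi_zero x 1 (by norm_num)) b2
  exact mvt_step (wPsi_step hf x 0 (by norm_num)) (wPsi_zero x 0 (by norm_num)) b1

theorem weno_ideal_weights_fifth_order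
    (f : ℝ → ℝ) (hf : ContDiff ℝ 5 f) (x : ℝ)
    (ubar : ℤ → ℝ → ℝ)
    (hubar : ∀ (i : ℤ) (h : ℝ), ubar i h =
      (1/h) * ∫ t in (x + ((i:ℝ) - 1/2)*h)..(x + ((i:ℝ) + 1/2)*h), f t)
    (u0 u1 u2 : ℝ → ℝ)
    (hu0 : ∀ h : ℝ, u0 h = (2*ubar (-2) h - 7*ubar (-1) h + 11*ubar 0 h)/6)
    (hu1 : ∀ h : ℝ, u1 h = (-(ubar (-1) h) + 5*ubar 0 h + 2*ubar 1 h)/6)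
    (hu2 : ∀ h : ℝ, u2 h = (2*ubar 0 h + 5*ubar 1 h - ubar 2 h)/6) :
    (fun h : ℝ => (1/10)*u0 h + (6/10)*u1 h + (3/10)*u2 h - f (x + h/2))
      =O[nhdsWithin (0:ℝ) (Set.Ioi 0)] (fun h : ℝ => h^5) := by
  set F : ℝ → ℝ := fun t => ∫ s in x..t, f s with hFdef
  have hFd : ∀ t, HasDerivAt F (f t) t := fun t =>
    intervalIntegral.integral_hasDerivAt_right
      (hf.continuous.intervalIntegrable x t)
      (hf.continuous.stronglyMeasurableAtFilter (μ := MeasureTheory.volume) (l := nhds t))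
      hf.continuous.continuousAt
  set Psi0 : ℝ → ℝ := fun h => wT x 0 F h - 60*h*f (x + h/2) with hPdef
  -- derivative of Psi0 is wPsi f x 0
  have hder : ∀ h : ℝ, HasDerivAt Psi0 (wPsi f x 0 h) h := by
    intro h
    have h1 : HasDerivAt (fun h : ℝ => 60*h) (60:ℝ) h := by
      simpa using (hasDerivAt_id h).const_mul (60:ℝ)
    have h2 := halfDeriv' hf x 0 (by norm_num) h
    simp only [iteratedDeriv_zero] at h2
    have hmul := h1.mul h2
    have := (wT_hasDerivAt x 0 hFd h).sub hmul
    refine this.congr_deriv ?_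
    simp only [wPsi, iteratedDeriv_zero]
    push_cast
    ring
  have hP0 : Psi0 0 = 0 := by
    simp [hPdef, wT, wC, wM, Fin.sum_univ_succ, Matrix.cons_val_zero, Matrix.cons_val_succ]
    ring
  have hO6 : Psi0 =O[nhds (0:ℝ)] fun h => h ^ 6 :=
    mvt_step hder hP0 (wPsi_zero_isBigO hf x)
  -- the target equals Psi0 h / (60*h) for h > 0
  have hbar : ∀ (i : ℤ) (h : ℝ), ubar i h =
      (1/h) * (F (x + ((i:ℝ)+1/2)*h) - F (x + ((i:ℝ)-1/2)*h)) := by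
    intro i h
    have := intervalIntegral.integral_interval_sub_left (μ := MeasureTheory.volume) (f := f)
      (a := x) (b := x + ((i:ℝ)+1/2)*h) (c := x + ((i:ℝ)-1/2)*h)
      (hf.continuous.intervalIntegrable x _) (hf.continuous.intervalIntegrable x _)
    rw [hubar i h, ← this]
  have heq : ∀ h : ℝ, 0 < h →
      (1/10)*u0 h + (6/10)*u1 h + (3/10)*u2 h - f (x + h/2) = Psi0 h / (60*h) := by
    intro h hpos
    have hne : h ≠ 0 := ne_of_gt hpos
    rw [hu0 h, hu1 h, hu2 h, hbar, hbar, hbar, hbar, hbar]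
    simp only [hPdef, wT, wC, wM, Fin.sum_univ_succ, Fin.sum_univ_zero, Matrix.cons_val_zero,
      Matrix.cons_val_succ]
    push_cast
    field_simp
    ring_nf
  -- conclude
  have hO6' : Psi0 =O[nhdsWithin (0:ℝ) (Set.Ioi 0)] fun h => h ^ 6 :=
    hO6.mono nhdsWithin_le_nhds
  rw [isBigO_iff] at hO6' ⊢
  obtain ⟨C, hC⟩ := hO6'
  refine ⟨|C|/60, ?_⟩
  filter_upwards [hC, self_mem_nhdsWithin] with h hh hmem
  have hpos : (0:ℝ) < h := hmem
  rw [heq h hpos]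
  rw [Real.norm_eq_abs, Real.norm_eq_abs] at *
  have habs : |Psi0 h / (60*h)| = |Psi0 h| / (60*h) := by
    rw [abs_div]
    congr 1
    exact abs_of_pos (by linarith)
  rw [habs]
  have hb : |Psi0 h| ≤ |C| * h^6 := by
    calc |Psi0 h| ≤ C * |h^6| := hh
      _ ≤ |C| * h^6 := by
          rw [abs_of_pos (pow_pos hpos 6)]
          gcongr
          exact le_abs_self C
  calc |Psi0 h| / (60*h) ≤ (|C| * h^6) / (60*h) := by gcongr
    _ = |C|/60 * |h^5| := by
        rw [abs_of_pos (pow_pos hpos 5)]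
        field_simp
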